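/- In the setting described, one has ∏_{i=a}^{2b−a} (γ − ε^i)^l (D⁺) ⊆ t^{b−a+1}·D⁺, where l = (b−a+1)·n and (γ − ε^i) denotes the additive endomorphism d ↦ γ(d) − ε^i·d of D (these endomorphisms commute with each other). -/

import Mathlib

open Pointwise

set_option maxHeartbeats 1000000
set_option synthInstance.maxHeartbeats 400000

theorem foldr_eq_prodEnd {k D : Type*} [Field k] [AddCommGroup D] [Module k D]
    (G : ℤ → Module.End k D) (l : ℕ) (L : List ℤ) :
    L.foldr (fun i g => (⇑(G i))^[l] ∘ g) id = ⇑((L.map fun i => G i ^ l).prod) := by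
  induction L with
  | nil => simp [List.foldr]; rfl
  | cons i L ih =>
    funext x
    simp only [List.foldr_cons, List.map_cons, List.prod_cons, Function.comp_apply, ih,
      Module.End.mul_apply, Module.End.pow_apply]

theorem listpow_comm {E : Type*} [Monoid E] (f : ℤ → E) (hf : ∀ i j, Commute (f i) (f j))
    (c n : ℕ) : ∀ L : List ℤ,
    ((L.map fun i => f i ^ (c * n)).prod) = ((L.map fun i => f i ^ n).prod) ^ c := by
  intro L
  induction L with
  | nil => simp
  | cons i L ih =>
    simp only [List.map_cons, List.prod_cons]
    have hcom : Commute (f i ^ n) ((L.map fun i => f i ^ n).prod) := by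
      apply Commute.list_prod_right
      intro x hx
      obtain ⟨j, -, rfl⟩ := List.mem_map.mp hx
      exact (hf i j).pow_pow n n
    rw [hcom.mul_pow, ← ih, ← pow_mul, mul_comm n c]

theorem listprod_pres {k D : Type*} [Field k] [AddCommGroup D] [Module k D]
    (S : Set D) (L : List (Module.End k D)) (h : ∀ f ∈ L, ∀ x ∈ S, f x ∈ S) :
    ∀ x ∈ S, L.prod x ∈ S := by
  induction L with
  | nil => intro x hx; simpa using hx
  | cons f L ih =>
    intro x hx
    rw [List.prod_cons, Module.End.mul_apply]
    exact h f (by simp) _ (ih (fun g hg => h g (by simp [hg])) x hx)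

/-- The composite of the commuting operators `(γ - ε^i)^l`, `i` running through the finite
set `s ⊆ ℤ` (they pairwise commute, so the order of composition is irrelevant). -/
noncomputable def gammaEpsProd {k D : Type*} [Field k] [AddCommGroup D] [Module k D]
    (γ : D → D) (ε : k) (l : ℕ) (s : Finset ℤ) : D → D :=
  (s.sort (· ≤ ·)).foldr (fun i g => (fun y : D => γ y - ε ^ i • y)^[l] ∘ g) id

/-- Wu, Claim `claimcharacteristicpolynomials` (abstract form): in the setting of a free
rank-`n` `k[[t]]`-lattice `D⁺` in `D` with a `σ`-semilinear automorphism `γ` whose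
characteristic polynomial on `D⁺/tD⁺` divides `∏_{c=a}^{b}(T - ε^c)^n`, one has
`∏_{i=a}^{2b-a} (γ - ε^i)^l (D⁺) ⊆ t^{b-a+1}·D⁺` with `l = (b-a+1)·n`. -/
theorem stmt12 (k : Type*) [Field k] (n : ℕ) (a b : ℤ) (hab : a ≤ b)
    (ε : k) (hε0 : ε ≠ 0) (hε : ∀ i : ℤ, i ≠ 0 → ε ^ i ≠ 1)
    (σ : LaurentSeries k ≃+* LaurentSeries k)
    (hσ : ∀ (f : LaurentSeries k) (i : ℤ), (σ f).coeff i = ε ^ i * f.coeff i)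
    (D : Type*) [AddCommGroup D] [Module (LaurentSeries k) D]
    [Module (PowerSeries k) D] [IsScalarTower (PowerSeries k) (LaurentSeries k) D]
    [Module k D] [IsScalarTower k (LaurentSeries k) D]
    (Dplus : Submodule (PowerSeries k) D)
    (hspan : Submodule.span (LaurentSeries k) (Dplus : Set D) = ⊤)
    (bD : Module.Basis (Fin n) (PowerSeries k) Dplus)
    (γ : D →ₛₗ[σ.toRingHom] D) (hbij : Function.Bijective γ)
    (hstab : ⇑γ '' (Dplus : Set D) = (Dplus : Set D))
    (M : Matrix (Fin n) (Fin n) (PowerSeries k))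
    (hM : ∀ j : Fin n, γ (bD j : D) = ∑ i : Fin n, M i j • ((bD i : D)))
    (hchar : (M.map (PowerSeries.constantCoeff (R := k))).charpoly ∣
      ∏ c ∈ Finset.Icc a b, (Polynomial.X - Polynomial.C (ε ^ c)) ^ n) :
    ∀ x ∈ Dplus,
      gammaEpsProd (⇑γ) ε ((b - a + 1).toNat * n) (Finset.Icc a (2 * b - a)) x ∈
        (HahnSeries.single (1 : ℤ) (1 : k) : LaurentSeries k) ^ (b - a + 1) •
          (Dplus : Set D) := by
  classical
  haveI inst1 : IsScalarTower k (LaurentSeries k) (LaurentSeries k) :=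
    ⟨fun r f g => by
      rw [smul_eq_mul, smul_eq_mul, ← HahnSeries.single_zero_mul_eq_smul,
        ← HahnSeries.single_zero_mul_eq_smul, mul_assoc]⟩
  haveI inst2 : SMulCommClass k (LaurentSeries k) (LaurentSeries k) :=
    ⟨fun r f g => by
      rw [smul_eq_mul, smul_eq_mul, ← HahnSeries.single_zero_mul_eq_smul,
        ← HahnSeries.single_zero_mul_eq_smul, mul_left_comm]⟩
  haveI inst3 : SMulCommClass k (LaurentSeries k) D :=
    ⟨fun r f x => by
      calc r • (f • x) = (r • f) • x := (smul_assoc r f x).symm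
        _ = ((r • (1 : LaurentSeries k)) * f) • x := by rw [smul_one_mul]
        _ = (f * (r • (1 : LaurentSeries k))) • x := by rw [mul_comm]
        _ = f • ((r • (1 : LaurentSeries k)) • x) := mul_smul _ _ _
        _ = f • (r • x) := by rw [smul_assoc, one_smul]⟩
  set t : LaurentSeries k := HahnSeries.single (1 : ℤ) (1 : k) with ht
  set c : ℕ := (b - a + 1).toNat with hc
  -- σ fixes constants
  have hσC : ∀ r : k, σ (r • (1 : LaurentSeries k)) = r • (1 : LaurentSeries k) := by
    intro r
    ext i
    rw [hσ, HahnSeries.coeff_smul, HahnSeries.coeff_one]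
    split
    · next h => subst h; simp
    · simp
  -- γ is k-linear
  have hγsmul : ∀ (r : k) (x : D), γ (r • x) = r • γ x := by
    intro r x
    have h1 : r • x = (r • (1 : LaurentSeries k)) • x := by
      rw [smul_assoc, one_smul]
    have h2 : r • γ x = (r • (1 : LaurentSeries k)) • γ x := by
      rw [smul_assoc, one_smul]
    rw [h1, h2, γ.map_smulₛₗ]
    exact congrArg (· • γ x) (hσC r)
  set γk : Module.End k D :=
    { toFun := ⇑γ, map_add' := fun x y => map_add γ x y,
      map_smul' := fun r x => hγsmul r x } with hγk
  set G : ℤ → Module.End k D := fun i => γk - ε ^ i • 1 with hG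
  have hGapp : ∀ (i : ℤ) (y : D), G i y = γ y - ε ^ i • y := by
    intro i y
    simp [hG, hγk, LinearMap.sub_apply, LinearMap.smul_apply]
  have hsm1 : ∀ (s : k) (f : Module.End k D), Commute f (s • 1) := by
    intro s f
    unfold Commute SemiconjBy
    rw [mul_smul_one, smul_one_mul]
  have hcomm : ∀ i j, Commute (G i) (G j) := by
    intro i j
    rw [hG]
    exact Commute.sub_left ((Commute.refl γk).sub_right (hsm1 (ε ^ j) γk))
      (((hsm1 (ε ^ i) γk).symm).sub_right (hsm1 (ε ^ j) (ε ^ i • 1)))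
  -- scalar action facts
  have hsingle0 : ∀ r : k, (HahnSeries.single (0:ℤ) r : LaurentSeries k)
      = r • (1 : LaurentSeries k) := by
    intro r
    ext i
    rw [HahnSeries.coeff_smul, HahnSeries.coeff_one, HahnSeries.coeff_single]
    split <;> simp
  have hCsmul : ∀ (r : k) (x : D), (PowerSeries.C (R := k) r) • x = r • x := by
    intro r x
    rw [← algebraMap_smul (LaurentSeries k) (PowerSeries.C (R := k) r) x]
    have h1 : algebraMap (PowerSeries k) (LaurentSeries k) (PowerSeries.C (R := k) r)
        = r • (1 : LaurentSeries k) := by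
      rw [LaurentSeries.coe_algebraMap]
      rw [HahnSeries.ofPowerSeries_C]
      rw [HahnSeries.C_apply, hsingle0]
    rw [h1, smul_assoc, one_smul]
  have hXsmul : ∀ x : D, (PowerSeries.X : PowerSeries k) • x = t • x := by
    intro x
    rw [← algebraMap_smul (LaurentSeries k) (PowerSeries.X : PowerSeries k) x]
    have h1 : algebraMap (PowerSeries k) (LaurentSeries k) (PowerSeries.X : PowerSeries k) = t := by
      rw [LaurentSeries.coe_algebraMap]
      exact HahnSeries.ofPowerSeries_X
    rw [h1]
  have hγmem : ∀ x ∈ Dplus, γ x ∈ Dplus := by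
    intro x hx
    have h2 : γ x ∈ (Dplus : Set D) := by
      rw [← hstab]; exact Set.mem_image_of_mem _ hx
    exact h2
  have hGmem : ∀ (i : ℤ), ∀ x ∈ Dplus, G i x ∈ Dplus := by
    intro i x hx
    rw [hGapp]
    refine sub_mem (hγmem x hx) ?_
    rw [← hCsmul]
    exact Submodule.smul_mem _ _ hx
  -- semilinearity over powers of t
  have hσt1 : σ t = ε • t := by
    ext i
    rw [hσ, HahnSeries.coeff_smul, ht, HahnSeries.coeff_single]
    split
    · next h => subst h; simp
    · simp
  have hσt : ∀ j : ℕ, σ (t ^ j) = (ε ^ j : k) • t ^ j := by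
    intro j
    rw [map_pow, hσt1, smul_pow]
  have hconj : ∀ (i : ℤ) (j : ℕ) (y : D),
      G i (t ^ j • y) = t ^ j • ((ε ^ j : k) • (G (i - j) y)) := by
    intro i j y
    have h1 : γ (t ^ j • y) = σ (t ^ j) • γ y := γ.map_smulₛₗ _ y
    rw [hGapp, hGapp, h1, hσt j, smul_assoc, smul_comm ((ε:k) ^ j) (t ^ j) (γ y),
      smul_comm (ε ^ i) (t ^ j) y, ← smul_sub]
    congr 1
    have hsc : (ε:k) ^ j * ε ^ (i - (j:ℤ)) = ε ^ i := by
      rw [← zpow_natCast ε j, ← zpow_add₀ hε0]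
      congr 1
      omega
    rw [smul_sub, smul_smul, hsc]
  have hconjpow : ∀ (i : ℤ) (j m : ℕ) (y : D),
      (G i ^ m) (t ^ j • y) = t ^ j • (((ε ^ j : k) ^ m) • ((G (i - j) ^ m) y)) := by
    intro i j m y
    induction m with
    | zero => simp
    | succ m ih =>
      have h1 : (G i ^ (m + 1)) (t ^ j • y) = (G i) ((G i ^ m) (t ^ j • y)) := by
        rw [pow_succ', Module.End.mul_apply]
      rw [h1, ih, hconj, map_smul, smul_smul (ε ^ j) ((ε ^ j) ^ m), ← pow_succ' (ε ^ j) m,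
        ← Module.End.mul_apply, ← pow_succ']
  have hconjlist : ∀ (j : ℕ) (L : List ℤ) (y : D),
      ((L.map fun i => G i ^ n).prod) (t ^ j • y) =
        t ^ j • ((((ε ^ j : k) ^ (n * L.length))) •
          (((L.map fun i => G (i - j) ^ n).prod) y)) := by
    intro j L y
    induction L with
    | nil => simp
    | cons i L ih =>
      rw [List.map_cons, List.prod_cons, List.map_cons, List.prod_cons,
        Module.End.mul_apply, Module.End.mul_apply, ih, hconjpow, map_smul, smul_smul,
        ← pow_add]
      congr 3
      · simp [Nat.mul_succ, Nat.add_comm]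
  -- the Cayley-Hamilton core
  have hCHgen : ∀ L' : List ℤ, (L' : Multiset ℤ) = (Finset.Icc a b).val →
      ∀ x ∈ Dplus, ((L'.map fun i => G i ^ n).prod) x ∈ t • (Dplus : Set D) := by
    set M₀ : Matrix (Fin n) (Fin n) k := M.map (PowerSeries.constantCoeff (R := k)) with hM₀
    set A : Module.End k (Fin n → k) := Matrix.toLinAlgEquiv' M₀ with hA
    set σP : PowerSeries k → PowerSeries k :=
      fun f => PowerSeries.mk fun m => ε ^ (m : ℕ) * PowerSeries.coeff (R := k) m f with hσP
    have hσPcoe : ∀ f : PowerSeries k,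
        σ (algebraMap (PowerSeries k) (LaurentSeries k) f)
          = algebraMap (PowerSeries k) (LaurentSeries k) (σP f) := by
      intro f
      have hco : ∀ (g : PowerSeries k) (i : ℤ),
          (algebraMap (PowerSeries k) (LaurentSeries k) g).coeff i
            = if i < 0 then 0 else PowerSeries.coeff (R := k) i.natAbs g := by
        intro g i
        rw [LaurentSeries.coe_algebraMap]
        exact PowerSeries.coeff_coe g i
      ext i
      rw [hσ, hco, hco]
      split
      · next h => rw [mul_zero]
      · next h =>
        rw [hσP]
        simp only [PowerSeries.coeff_mk]
        congr 1
        rw [← zpow_natCast ε i.natAbs]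
        congr 1
        omega
    have hγPS : ∀ (f : PowerSeries k) (d : D), γ (f • d) = σP f • γ d := by
      intro f d
      rw [← algebraMap_smul (LaurentSeries k) f d]
      have h1 := γ.map_smulₛₗ (algebraMap (PowerSeries k) (LaurentSeries k) f) d
      rw [h1]
      show σ (algebraMap _ _ f) • γ d = _
      rw [hσPcoe, algebraMap_smul]
    set φ : Dplus → (Fin n → k) :=
      fun z i => PowerSeries.constantCoeff (R := k) (bD.repr z i) with hφ
    have hcoesum : ∀ f : Fin n → PowerSeries k,
        ((∑ jj, f jj • bD jj : Dplus) : D) = ∑ jj, f jj • (bD jj : D) := by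
      intro f
      rw [← Submodule.subtype_apply, map_sum]
      simp
    have hsum : ∀ z : Dplus, (z : D) = ∑ i : Fin n, (bD.repr z i) • ((bD i : D)) := by
      intro z
      conv_lhs => rw [← bD.sum_repr z]
      rw [← hcoesum]
    have hreprsum : ∀ (f : Fin n → PowerSeries k) (i : Fin n),
        bD.repr (∑ jj, f jj • bD jj) i = f i := by
      intro f i
      rw [map_sum]
      simp only [map_smul, Module.Basis.repr_self]
      rw [Finsupp.finset_sum_apply]
      simp only [Finsupp.smul_single, smul_eq_mul, mul_one, Finsupp.single_apply]
      rw [Finset.sum_ite_eq' Finset.univ i f]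
      simp
    have hγz : ∀ z : Dplus,
        γ (z : D) = ∑ jj, (∑ i, σP (bD.repr z i) * M jj i) • ((bD jj : D)) := by
      intro z
      conv_lhs => rw [hsum z]
      rw [map_sum]
      calc ∑ i, γ (bD.repr z i • (bD i : D))
          = ∑ i, ∑ jj, (σP (bD.repr z i) * M jj i) • (bD jj : D) := by
            refine Finset.sum_congr rfl fun i _ => ?_
            rw [hγPS, hM i, Finset.smul_sum]
            refine Finset.sum_congr rfl fun jj _ => ?_
            rw [smul_smul]
        _ = ∑ jj, ∑ i, (σP (bD.repr z i) * M jj i) • (bD jj : D) := Finset.sum_comm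
        _ = ∑ jj, (∑ i, σP (bD.repr z i) * M jj i) • (bD jj : D) := by
            refine Finset.sum_congr rfl fun jj _ => ?_
            rw [Finset.sum_smul]
    set γhat : Dplus → Dplus := fun z => ⟨γ (z : D), hγmem _ z.2⟩ with hγhat
    have hreprγ : ∀ (z : Dplus) (i : Fin n),
        bD.repr (γhat z) i = ∑ jj, σP (bD.repr z jj) * M i jj := by
      intro z i
      have hzeq : γhat z = ∑ jj, (fun jj => ∑ i2, σP (bD.repr z i2) * M jj i2) jj • bD jj := by
        apply Subtype.ext
        rw [hcoesum]
        exact hγz z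
      rw [hzeq, hreprsum]
    have hccσP : ∀ f, PowerSeries.constantCoeff (R := k) (σP f) = PowerSeries.constantCoeff (R := k) f := by
      intro f
      rw [hσP, ← PowerSeries.coeff_zero_eq_constantCoeff_apply,
        ← PowerSeries.coeff_zero_eq_constantCoeff_apply]
      simp [PowerSeries.coeff_mk]
    have hφγ : ∀ z, φ (γhat z) = M₀.mulVec (φ z) := by
      intro z
      funext i
      simp only [hφ]
      rw [hreprγ, map_sum]
      simp only [map_mul, hccσP]
      rw [Matrix.mulVec, dotProduct]
      refine Finset.sum_congr rfl fun jj _ => ?_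
      rw [hM₀, Matrix.map_apply, mul_comm]
    set Ghat : ℤ → Dplus → Dplus := fun c0 z => ⟨G c0 (z : D), hGmem c0 _ z.2⟩ with hGhat
    have hφGhat : ∀ (c0 : ℤ) (z : Dplus), φ (Ghat c0 z) = (A - ε ^ c0 • 1) (φ z) := by
      intro c0 z
      have h1 : Ghat c0 z = γhat z - PowerSeries.C (R := k) (ε ^ c0) • z := by
        apply Subtype.ext
        show G c0 (z : D) = ((γhat z - PowerSeries.C (R := k) (ε ^ c0) • z : Dplus) : D)
        rw [hGapp]
        have : ((γhat z - PowerSeries.C (R := k) (ε ^ c0) • z : Dplus) : D)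
            = γ (z : D) - PowerSeries.C (R := k) (ε ^ c0) • (z : D) := by
          simp [hγhat]
        rw [this, hCsmul]
      rw [h1]
      funext i
      simp only [hφ]
      rw [map_sub, Finsupp.sub_apply, map_sub]
      have h2 : bD.repr (PowerSeries.C (R := k) (ε ^ c0) • z) i
          = PowerSeries.C (R := k) (ε ^ c0) * bD.repr z i := by
        rw [map_smul, Finsupp.smul_apply, smul_eq_mul]
      rw [h2, map_mul, PowerSeries.constantCoeff_C]
      have h3 : PowerSeries.constantCoeff (R := k) (bD.repr (γhat z) i) = M₀.mulVec (φ z) i := by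
        have := congrFun (hφγ z) i
        simp only [hφ] at this
        exact this
      rw [h3]
      rw [LinearMap.sub_apply, LinearMap.smul_apply, Module.End.one_apply, hA,
        Matrix.toLinAlgEquiv'_apply]
      simp only [Pi.sub_apply, Pi.smul_apply, smul_eq_mul]
      rfl
    have hGhatcoe : ∀ (c0 : ℤ) (m : ℕ) (z : Dplus),
        (((Ghat c0)^[m] z : Dplus) : D) = (G c0 ^ m) (z : D) := by
      intro c0 m
      induction m with
      | zero => intro z; simp
      | succ m ih =>
        intro z
        rw [Function.iterate_succ_apply', pow_succ' (G c0) m, Module.End.mul_apply, ← ih z]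
    have hφGhatIter : ∀ (c0 : ℤ) (m : ℕ) (z : Dplus),
        φ ((Ghat c0)^[m] z) = ((A - ε ^ c0 • 1) ^ m) (φ z) := by
      intro c0 m
      induction m with
      | zero => intro z; simp
      | succ m ih =>
        intro z
        rw [Function.iterate_succ_apply', pow_succ' _ m, Module.End.mul_apply, ← ih z, hφGhat]
    set F : List ℤ → Dplus → Dplus :=
      fun L => L.foldr (fun c0 g => (Ghat c0)^[n] ∘ g) id with hF
    have hFcoe : ∀ (L : List ℤ) (z : Dplus),
        ((F L z : Dplus) : D) = ((L.map fun i => G i ^ n).prod) (z : D) := by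
      intro L
      induction L with
      | nil => intro z; simp [hF]
      | cons c0 L ih =>
        intro z
        show (((Ghat c0)^[n] (F L z) : Dplus) : D) = _
        rw [hGhatcoe, ih z, List.map_cons, List.prod_cons, Module.End.mul_apply]
    have hφF : ∀ (L : List ℤ) (z : Dplus),
        φ (F L z) = ((L.map fun c0 => (A - ε ^ c0 • 1) ^ n).prod) (φ z) := by
      intro L
      induction L with
      | nil => intro z; simp [hF]
      | cons c0 L ih =>
        intro z
        show φ ((Ghat c0)^[n] (F L z)) = _
        rw [hφGhatIter, ih z, List.map_cons, List.prod_cons, Module.End.mul_apply]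
    intro L' hL' x hx
    have hpoly : ((L'.map fun c0 => (A - ε ^ c0 • 1) ^ n).prod) = 0 := by
      have h1 : (∏ c0 ∈ Finset.Icc a b, (Polynomial.X - Polynomial.C (ε ^ c0)) ^ n)
          = ((L'.map fun c0 => (Polynomial.X - Polynomial.C (ε ^ c0)) ^ n).prod) := by
        rw [Finset.prod_eq_multiset_prod, ← hL', Multiset.map_coe, Multiset.prod_coe]
      obtain ⟨u, hu⟩ := hchar
      have h2 : Polynomial.aeval A ((M.map (PowerSeries.constantCoeff (R := k))).charpoly) = 0 := by
        rw [← hM₀, hA, Polynomial.aeval_algHom_apply (Matrix.toLinAlgEquiv' (R := k)) M₀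
          M₀.charpoly, Matrix.aeval_self_charpoly, map_zero]
      have h3 : Polynomial.aeval A
          (∏ c0 ∈ Finset.Icc a b, (Polynomial.X - Polynomial.C (ε ^ c0)) ^ n) = 0 := by
        rw [hu, map_mul, h2, zero_mul]
      rw [h1, map_list_prod (Polynomial.aeval A), List.map_map] at h3
      have h4 : (⇑(Polynomial.aeval A) ∘ fun c0 => (Polynomial.X - Polynomial.C (ε ^ c0)) ^ n)
          = fun c0 : ℤ => (A - ε ^ c0 • 1) ^ n := by
        funext c0
        simp only [Function.comp_apply, map_pow, map_sub, Polynomial.aeval_X,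
          Polynomial.aeval_C, Algebra.algebraMap_eq_smul_one]
      rw [h4] at h3
      exact h3
    set z : Dplus := ⟨x, hx⟩ with hz
    have h5 : φ (F L' z) = 0 := by
      rw [hφF, hpoly]
      simp
    have h6 : ∀ w : Dplus, φ w = 0 → (w : D) ∈ t • (Dplus : Set D) := by
      intro w hw
      simp only [hφ] at hw
      have hdvd : ∀ i, (PowerSeries.X : PowerSeries k) ∣ bD.repr w i := by
        intro i
        rw [PowerSeries.X_dvd_iff]
        exact congrFun hw i
      choose h hh using hdvd
      refine ⟨((∑ i, h i • bD i : Dplus) : D), Submodule.coe_mem _, ?_⟩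
      show t • ((∑ i, h i • bD i : Dplus) : D) = (w : D)
      rw [← hXsmul, hcoesum, Finset.smul_sum]
      calc ∑ i, PowerSeries.X • (h i • (bD i : D))
          = ∑ i, bD.repr w i • (bD i : D) := by
            refine Finset.sum_congr rfl fun i _ => ?_
            rw [smul_smul, ← hh i]
        _ = (w : D) := (hsum w).symm
    have h7 := h6 (F L' z) h5
    rw [hFcoe] at h7
    exact h7
  -- preservation of t^m Dplus by each G i
  have hGpres : ∀ (i : ℤ) (m : ℕ), ∀ x ∈ (t ^ m) • (Dplus : Set D),
      G i x ∈ (t ^ m) • (Dplus : Set D) := by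
    intro i m x hx
    obtain ⟨y, hy, rfl⟩ := hx
    rw [hconj]
    refine Set.smul_mem_smul_set ?_
    rw [← hCsmul]
    exact Submodule.smul_mem _ _ (hGmem _ y hy)
  have hGpowpres : ∀ (i : ℤ) (m q : ℕ), ∀ x ∈ (t ^ q) • (Dplus : Set D),
      (G i ^ m) x ∈ (t ^ q) • (Dplus : Set D) := by
    intro i m q
    induction m with
    | zero => intro x hx; simpa using hx
    | succ m ih =>
      intro x hx
      rw [pow_succ', Module.End.mul_apply]
      exact hGpres i q _ (ih x hx)
  set W : Module.End k D := (((Finset.Icc a (2 * b - a)).sort (· ≤ ·)).map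
    (fun i => G i ^ n)).prod with hW
  have hstep : ∀ j : ℕ, (j : ℤ) ≤ b - a → ∀ x ∈ (t ^ j) • (Dplus : Set D),
      W x ∈ (t ^ (j + 1)) • (Dplus : Set D) := by
    intro j hj x hx
    set s1 := Finset.Icc a (2 * b - a) with hs1
    set sm := Finset.Icc (a + (j:ℤ)) (b + (j:ℤ)) with hsm
    have hsub : sm ⊆ s1 := by
      intro u hu
      simp only [hsm, hs1, Finset.mem_Icc] at *
      omega
    set Ld := (s1 \ sm).sort (· ≤ ·) with hLd
    set Lm := sm.sort (· ≤ ·) with hLm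
    have hperm : (s1.sort (· ≤ ·)).Perm (Ld ++ Lm) := by
      rw [← Multiset.coe_eq_coe]
      have h1 : ((Ld ++ Lm : List ℤ) : Multiset ℤ) = (s1 \ sm).val + sm.val := by
        rw [← Finset.sort_eq (s1 \ sm) (· ≤ ·), ← Finset.sort_eq sm (· ≤ ·)]
        rfl
      rw [h1, Finset.sdiff_val, tsub_add_cancel_of_le (Finset.val_le_iff.mpr hsub),
        Finset.sort_eq]
    have hW2 : W = ((Ld ++ Lm).map fun i => G i ^ n).prod := by
      refine List.Perm.prod_eq' (hperm.map _) ?_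
      refine List.pairwise_of_forall_mem_list ?_
      intro f hf g hg
      obtain ⟨i1, -, rfl⟩ := List.mem_map.mp hf
      obtain ⟨i2, -, rfl⟩ := List.mem_map.mp hg
      exact (hcomm i1 i2).pow_pow n n
    rw [hW2, List.map_append, List.prod_append, Module.End.mul_apply]
    obtain ⟨y, hy, rfl⟩ := hx
    rw [hconjlist j Lm y]
    have hmm : (Lm.map fun i => G (i - (j:ℤ)) ^ n)
        = ((Lm.map (fun i => i - (j:ℤ))).map fun i => G i ^ n) := by
      rw [List.map_map]; rfl
    rw [hmm]
    have hms : ((Lm.map fun i => i - (j:ℤ)) : Multiset ℤ) = (Finset.Icc a b).val := by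
      have h1 : ((Lm : List ℤ) : Multiset ℤ) = sm.val := Finset.sort_eq _ _
      have h2 : sm = Finset.map (addRightEmbedding (j:ℤ)) (Finset.Icc a b) := by
        rw [Finset.map_add_right_Icc]
      calc ((Lm.map fun i => i - (j:ℤ)) : Multiset ℤ)
          = Multiset.map (fun i => i - (j:ℤ)) (Lm : Multiset ℤ) := by
            rw [Multiset.map_coe]
        _ = Multiset.map (fun i => i - (j:ℤ)) sm.val := by rw [h1]
        _ = (Finset.Icc a b).val := by
            have hcomp : ((fun i : ℤ => i - (j:ℤ)) ∘ ⇑(addRightEmbedding (j:ℤ)))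
                = id := by
              funext u
              simp [addRightEmbedding_apply]
            rw [h2, Finset.map_val, Multiset.map_map, hcomp, Multiset.map_id]
    obtain ⟨w, hw, hweq⟩ := hCHgen (Lm.map (fun i => i - (j:ℤ))) hms y hy
    rw [← hweq]
    refine listprod_pres ((t ^ (j+1)) • (Dplus : Set D)) _ ?_ _ ?_
    · intro f hf z hz
      obtain ⟨i1, -, rfl⟩ := List.mem_map.mp hf
      exact hGpowpres i1 n (j+1) z hz
    · rw [smul_comm _ t w, smul_smul, ← pow_succ]
      refine Set.smul_mem_smul_set ?_
      rw [← hCsmul]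
      exact Submodule.smul_mem _ _ hw
  have hpow : ∀ j : ℕ, j ≤ c → ∀ x ∈ Dplus, (W ^ j) x ∈ (t ^ j) • (Dplus : Set D) := by
    intro j
    induction j with
    | zero =>
      intro _ x hx
      rw [pow_zero W, Module.End.one_apply]
      exact ⟨x, hx, by show t ^ 0 • x = x; rw [pow_zero, one_smul]⟩
    | succ j ih =>
      intro hj x hx
      rw [pow_succ' W j, Module.End.mul_apply]
      refine hstep j ?_ _ (ih (by omega) x hx)
      omega
  -- final assembly
  intro x hx
  have hfold : gammaEpsProd (⇑γ) ε (c * n) (Finset.Icc a (2 * b - a)) x = (W ^ c) x := by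
    have hfun : (fun (i : ℤ) (g : D → D) => (fun y : D => γ y - ε ^ i • y)^[c * n] ∘ g)
        = fun (i : ℤ) (g : D → D) => (⇑(G i))^[c * n] ∘ g := by
      funext i g
      have : (fun y : D => γ y - ε ^ i • y) = ⇑(G i) := funext fun y => (hGapp i y).symm
      rw [this]
    rw [gammaEpsProd, hfun, foldr_eq_prodEnd, listpow_comm G hcomm c n, hW]
  have hmem := hpow c le_rfl x hx
  rw [← hfold] at hmem
  have htc : (t : LaurentSeries k) ^ (b - a + 1) = t ^ c := by
    rw [hc, ← zpow_natCast, Int.toNat_of_nonneg (by omega)]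
  rw [ht] at hmem ⊢
  rw [htc]
  exact hmem
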